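/- There exist constants c₁, c₂ > 0 (depending on d) such that for every R > 0, the integral ∫₁^∞ s^{d/2 - 2} · exp(-(s + R²/s)) ds lies between c₁·e^{-c₂·R} and c₂·e^{-c₁·R}. More precisely, ∫₁^∞ s^{d/2-2} e^{-(s + R²/s)} ds ≍ e^{-R} in the sense that there exist positive constants a₁, a₂, a₃, a₄ with a₁ e^{-a₂ R} ≤ ∫₁^∞ s^{d/2-2} e^{-(s+R²/s)} ds ≤ a₃ e^{-a₄ R} for all R > 0. -/

import Mathlib

open MeasureTheory Set Real

theorem integral_asymp_expR (d : ℕ) (hd : 1 ≤ d) :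
    ∃ a₁ a₂ a₃ a₄ : ℝ, 0 < a₁ ∧ 0 < a₂ ∧ 0 < a₃ ∧ 0 < a₄ ∧
      ∀ R : ℝ, 0 < R →
        a₁ * Real.exp (-a₂ * R) ≤
          (∫ s in Set.Ioi (1:ℝ), s ^ ((d : ℝ) / 2 - 2) * Real.exp (-(s + R ^ 2 / s))) ∧
        (∫ s in Set.Ioi (1:ℝ), s ^ ((d : ℝ) / 2 - 2) * Real.exp (-(s + R ^ 2 / s))) ≤
          a₃ * Real.exp (-a₄ * R) := by
  set α : ℝ := (d : ℝ) / 2 - 2 with hα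
  set β : ℝ := max α 0 with hβ
  -- the dominating function
  have hGint : IntegrableOn (fun s : ℝ => s ^ β * Real.exp (-(1/2) * s)) (Ioi 1) := by
    have := integrableOn_rpow_mul_exp_neg_mul_rpow (p := 1) (s := β) (b := 1/2)
      (lt_of_lt_of_le (by norm_num) (le_max_right α 0)) one_pos (by norm_num)
    simp only [Real.rpow_one] at this
    exact this.mono_set (Ioi_subset_Ioi (by norm_num))
  set C : ℝ := ∫ s in Ioi (1:ℝ), s ^ β * Real.exp (-(1/2) * s) with hC
  have hC0 : 0 ≤ C := by
    apply setIntegral_nonneg measurableSet_Ioi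
    intro x hx
    have : (0:ℝ) < x := lt_trans one_pos hx
    positivity
  refine ⟨Real.exp (-6), 4, C + 1, 1, Real.exp_pos _, by norm_num, by linarith, one_pos, ?_⟩
  intro R hR
  -- continuity / measurability of the integrand
  have hcont : ContinuousOn (fun s : ℝ => s ^ α * Real.exp (-(s + R ^ 2 / s))) (Ioi 1) := by
    apply ContinuousOn.mul
    · exact continuousOn_id.rpow_const fun x hx => Or.inl (ne_of_gt (lt_trans one_pos hx))
    · exact Real.continuous_exp.comp_continuousOn
        ((continuousOn_id.add (continuousOn_const.div continuousOn_id
          fun x hx => ne_of_gt (lt_trans one_pos hx))).neg)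
  -- pointwise bound on Ioi 1
  have hbd : ∀ s ∈ Ioi (1:ℝ), s ^ α * Real.exp (-(s + R ^ 2 / s))
      ≤ Real.exp (-R) * (s ^ β * Real.exp (-(1/2) * s)) := by
    intro s hs
    have hs1 : (1:ℝ) < s := hs
    have hs0 : (0:ℝ) < s := lt_trans one_pos hs1
    have h1 : s ^ α ≤ s ^ β := Real.rpow_le_rpow_of_exponent_le hs1.le (le_max_left _ _)
    have h2 : Real.exp (-(s + R ^ 2 / s)) ≤ Real.exp (-R) * Real.exp (-(1/2) * s) := by
      rw [← Real.exp_add]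
      apply Real.exp_le_exp.2
      have hkey : R ≤ s / 2 + R ^ 2 / s := by
        rw [div_add_div _ _ two_ne_zero hs0.ne', le_div_iff₀ (by positivity)]
        nlinarith [sq_nonneg (s - R), sq_nonneg R]
      linarith
    calc s ^ α * Real.exp (-(s + R ^ 2 / s)) ≤ s ^ β * (Real.exp (-R) * Real.exp (-(1/2) * s)) := by
          apply mul_le_mul h1 h2 (Real.exp_pos _).le (Real.rpow_nonneg hs0.le _)
      _ = Real.exp (-R) * (s ^ β * Real.exp (-(1/2) * s)) := by ring
  -- integrability of the integrand
  have hFint : IntegrableOn (fun s : ℝ => s ^ α * Real.exp (-(s + R ^ 2 / s))) (Ioi 1) := by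
    apply Integrable.mono' (hGint.const_mul (Real.exp (-R)))
      (hcont.aestronglyMeasurable measurableSet_Ioi)
    filter_upwards [ae_restrict_mem measurableSet_Ioi] with s hs
    have hs0 : (0:ℝ) < s := lt_trans one_pos hs
    rw [Real.norm_eq_abs, abs_of_nonneg (by positivity)]
    exact hbd s hs
  constructor
  · -- lower bound
    have hsub : Ioc (R + 1) (R + 2) ⊆ Ioi (1:ℝ) := fun x hx => by
      simp only [mem_Ioc, mem_Ioi] at *; linarith [hx.1]
    have hlow : ∀ s ∈ Ioc (R + 1) (R + 2),
        Real.exp (-(4 * R + 6)) ≤ s ^ α * Real.exp (-(s + R ^ 2 / s)) := by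
      intro s hs
      obtain ⟨hs1, hs2⟩ := hs
      have hs0 : (0:ℝ) < s := by linarith
      have hsge1 : (1:ℝ) ≤ s := by linarith
      have hα2 : (-2 : ℝ) ≤ α := by
        rw [hα]
        have : (1:ℝ) ≤ (d:ℝ) := by exact_mod_cast hd
        linarith
      have h1 : Real.exp (-(2 * s)) ≤ s ^ α := by
        have e1 : s ≤ Real.exp s := by linarith [Real.add_one_le_exp s]
        have e2 : s ^ 2 ≤ Real.exp (2 * s) := by
          rw [show (2:ℝ) * s = s + s by ring, Real.exp_add]
          nlinarith [Real.exp_pos s]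
        have h3 : s ^ ((-2:ℝ)) = (s ^ 2)⁻¹ := by
          rw [show ((-2:ℝ)) = -(2:ℕ) by norm_num, Real.rpow_neg hs0.le, Real.rpow_natCast]
        have h4 : Real.exp (-(2 * s)) ≤ s ^ ((-2:ℝ)) := by
          rw [h3, Real.exp_neg]
          exact inv_anti₀ (by positivity) e2
        exact h4.trans (Real.rpow_le_rpow_of_exponent_le hsge1 hα2)
      have h2 : Real.exp (-(4 * R + 6)) ≤ Real.exp (-(2 * s)) * Real.exp (-(s + R ^ 2 / s)) := by
        rw [← Real.exp_add]
        apply Real.exp_le_exp.2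
        have hR2 : R ^ 2 / s ≤ R := by
          rw [div_le_iff₀ hs0]; nlinarith
        nlinarith
      calc Real.exp (-(4 * R + 6)) ≤ Real.exp (-(2 * s)) * Real.exp (-(s + R ^ 2 / s)) := h2
        _ ≤ s ^ α * Real.exp (-(s + R ^ 2 / s)) :=
          mul_le_mul_of_nonneg_right h1 (Real.exp_pos _).le
    have key : Real.exp (-(4 * R + 6)) ≤
        ∫ s in Ioc (R + 1) (R + 2), s ^ α * Real.exp (-(s + R ^ 2 / s)) := by
      have hμ : (volume (Ioc (R + 1) (R + 2))).toReal = 1 := by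
        rw [Real.volume_Ioc]; norm_num
      have := setIntegral_ge_of_const_le_real (μ := volume) (c := Real.exp (-(4 * R + 6)))
        measurableSet_Ioc (by rw [Real.volume_Ioc]; exact ENNReal.ofReal_ne_top)
        hlow (hFint.mono_set hsub)
      rwa [Measure.real, hμ, mul_one] at this
    have hmono : ∫ s in Ioc (R + 1) (R + 2), s ^ α * Real.exp (-(s + R ^ 2 / s))
        ≤ ∫ s in Ioi (1:ℝ), s ^ α * Real.exp (-(s + R ^ 2 / s)) := by
      apply setIntegral_mono_set hFint
      · filter_upwards [ae_restrict_mem measurableSet_Ioi] with s hs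
        have hs0 : (0:ℝ) < s := lt_trans one_pos hs
        positivity
      · exact HasSubset.Subset.eventuallyLE hsub
    calc Real.exp (-6) * Real.exp (-4 * R) = Real.exp (-(4 * R + 6)) := by
          rw [← Real.exp_add]; ring_nf
      _ ≤ _ := key.trans hmono
  · -- upper bound
    have hup : ∫ s in Ioi (1:ℝ), s ^ α * Real.exp (-(s + R ^ 2 / s))
        ≤ ∫ s in Ioi (1:ℝ), Real.exp (-R) * (s ^ β * Real.exp (-(1/2) * s)) :=
      setIntegral_mono_on hFint (hGint.const_mul _) measurableSet_Ioi hbd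
    rw [integral_const_mul] at hup
    calc ∫ s in Ioi (1:ℝ), s ^ α * Real.exp (-(s + R ^ 2 / s)) ≤ Real.exp (-R) * C := hup
      _ ≤ (C + 1) * Real.exp (-1 * R) := by
          rw [neg_one_mul, mul_comm]
          exact mul_le_mul_of_nonneg_right (by linarith) (Real.exp_pos _).le
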